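/- Let α = α_0 + uα_1 + ⋯ + u^{t−1}α_{t−1} and β = β_0 + uβ_1 + ⋯ + u^{t−1}β_{t−1} ∈ R^t be such that x² + α_{0,0}x + β_{0,0} is irreducible over F, where α_{0,0}, β_{0,0} are the unique elements of F with α_{0,0}^{p^s} = α_0 and β_{0,0}^{p^s} = β_0. Then for all a, b ∈ F not both zero, the image of the polynomial ax + b is invertible in the quotient ring R^t[x]/⟨x^{2p^s} + αx^{p^s} + β⟩. -/

import Mathlib

open Polynomial

/-- The finite chain ring `R^t = 𝔽_{p^m}[u]/⟨u^t⟩`. -/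
abbrev Rt (p m t : ℕ) [Fact p.Prime] : Type _ :=
  Polynomial (GaloisField p m) ⧸ Ideal.span {(X : Polynomial (GaloisField p m)) ^ t}

noncomputable instance Rt.instCommRing (p m t : ℕ) [Fact p.Prime] : CommRing (Rt p m t) :=
  Ideal.Quotient.commRing _

/-- The canonical projection `𝔽_{p^m}[u] → R^t`. -/
noncomputable def mkRt (p m t : ℕ) [Fact p.Prime] :
    Polynomial (GaloisField p m) →+* Rt p m t :=
  Ideal.Quotient.mk _

/-- The canonical embedding `𝔽_{p^m} → R^t`. -/
noncomputable def κ (p m t : ℕ) [Fact p.Prime] : GaloisField p m →+* Rt p m t :=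
  (mkRt p m t).comp (C : GaloisField p m →+* Polynomial (GaloisField p m))

/-- The residue map `R^t → 𝔽_{p^m}`, evaluation at `0`. -/
noncomputable def εmap (p m t : ℕ) [Fact p.Prime] (ht : 1 ≤ t) :
    Rt p m t →+* GaloisField p m :=
  Ideal.Quotient.lift _ (evalRingHom 0) (by
    intro g hg
    rw [Ideal.mem_span_singleton] at hg
    obtain ⟨q, rfl⟩ := hg
    simp [zero_pow (by omega : t ≠ 0)])

lemma eps_mk' (p m t : ℕ) [Fact p.Prime] (ht : 1 ≤ t) (g : Polynomial (GaloisField p m)) :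
    εmap p m t ht (Ideal.Quotient.mk
      (Ideal.span {(X : Polynomial (GaloisField p m)) ^ t}) g) = g.eval 0 := by
  simp [εmap]

lemma eps_mk (p m t : ℕ) [Fact p.Prime] (ht : 1 ≤ t) (g : Polynomial (GaloisField p m)) :
    εmap p m t ht (mkRt p m t g) = g.eval 0 :=
  eps_mk' p m t ht g

lemma isUnit_of_eps_ne_zero (p m t : ℕ) [Fact p.Prime] (ht : 1 ≤ t)
    (r : Rt p m t) (h : εmap p m t ht r ≠ 0) : IsUnit r := by
  obtain ⟨g, rfl⟩ := Ideal.Quotient.mk_surjective r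
  have h0 : g.eval 0 ≠ 0 := by rwa [eps_mk' p m t ht g] at h
  have hX : (X : Polynomial (GaloisField p m)) ∣ g - C (g.eval 0) := by
    rw [X_dvd_iff]
    simp [coeff_zero_eq_eval_zero]
  obtain ⟨q, hq⟩ := hX
  have hnilX : IsNilpotent (mkRt p m t X) := by
    refine ⟨t, ?_⟩
    rw [← map_pow]
    exact Ideal.Quotient.eq_zero_iff_mem.2 (Ideal.subset_span rfl)
  have hnil : IsNilpotent (mkRt p m t (g - C (g.eval 0))) := by
    rw [hq, map_mul, mul_comm]
    exact (Commute.all _ _).isNilpotent_mul_left hnilX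
  have hunit : IsUnit (mkRt p m t (C (g.eval 0))) :=
    (isUnit_C.2 (isUnit_iff_ne_zero.2 h0)).map (mkRt p m t)
  have hsum : mkRt p m t g = mkRt p m t (C (g.eval 0)) + mkRt p m t (g - C (g.eval 0)) := by
    rw [← map_add]; ring_nf
  rw [show (Ideal.Quotient.mk _ g : Rt p m t) = mkRt p m t g from rfl, hsum]
  exact hnil.isUnit_add_left_of_commute hunit (Commute.all _ _)

lemma eval_zero_sum {F : Type*} [Field F] (t : ℕ) (ht : 1 ≤ t) (c : ℕ → F) :
    (∑ i ∈ Finset.range t, C (c i) * X ^ i).eval 0 = c 0 := by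
  rw [eval_finset_sum, Finset.sum_eq_single 0]
  · simp
  · intro i _ hne; simp [zero_pow hne]
  · intro h; exact absurd (Finset.mem_range.2 ht) h

/-- Let `α, β ∈ R^t` be such that `x² + α_{0,0}x + β_{0,0}` is irreducible
over `𝔽_{p^m}`, where `α_{0,0}^{p^s} = α₀` and `β_{0,0}^{p^s} = β₀`.  Then for all
`a, b ∈ 𝔽_{p^m}` not both zero, the image of `ax + b` is invertible in
`R^t[x]/⟨x^{2p^s} + αx^{p^s} + β⟩`. -/
theorem stmt_4 (p m s t : ℕ) [Fact p.Prime] (hm : m ≠ 0) (ht : 1 ≤ t)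
    (αc βc : ℕ → GaloisField p m) (α00 β00 : GaloisField p m)
    (hα00 : α00 ^ p ^ s = αc 0) (hβ00 : β00 ^ p ^ s = βc 0)
    (hirr : Irreducible ((X : Polynomial (GaloisField p m)) ^ 2 + C α00 * X + C β00)) :
    ∀ a b : GaloisField p m, ¬ (a = 0 ∧ b = 0) →
      IsUnit (Ideal.Quotient.mk
        (Ideal.span {((X : Polynomial (Rt p m t)) ^ (2 * p ^ s) +
          C (mkRt p m t (∑ i ∈ Finset.range t, C (αc i) * X ^ i)) * X ^ p ^ s +
          C (mkRt p m t (∑ i ∈ Finset.range t, C (βc i) * X ^ i)))})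
        (C (κ p m t a) * X + C (κ p m t b))) := by
  intro a b hab
  set A := mkRt p m t (∑ i ∈ Finset.range t, C (αc i) * X ^ i) with hA
  set B := mkRt p m t (∑ i ∈ Finset.range t, C (βc i) * X ^ i) with hB
  set f : Polynomial (Rt p m t) :=
    (X : Polynomial (Rt p m t)) ^ (2 * p ^ s) + C A * X ^ p ^ s + C B with hf
  set Qmk := Ideal.Quotient.mk (Ideal.span {f}) with hQmk
  -- the quadratic has no roots
  have hnoroot : ∀ y : GaloisField p m, y ^ 2 + α00 * y + β00 ≠ 0 := by
    intro y hy
    have hdvd : (X - C y) ∣ ((X : Polynomial (GaloisField p m)) ^ 2 + C α00 * X + C β00) := by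
      rw [dvd_iff_isRoot]
      simp [IsRoot, hy]
    obtain ⟨r, hr⟩ := hdvd
    rcases hirr.isUnit_or_isUnit hr with h | h
    · exact not_isUnit_X_sub_C y h
    · obtain ⟨u, hu, hCu⟩ := Polynomial.isUnit_iff.mp h
      have hdeg : ((X : Polynomial (GaloisField p m)) ^ 2 + C α00 * X + C β00).natDegree = 2 := by
        compute_degree!
      rw [hr, ← hCu, natDegree_mul (X_sub_C_ne_zero y)
        (by simpa using hu.ne_zero), natDegree_X_sub_C, natDegree_C] at hdeg
      omega
  -- ε composed with κ is identity
  have heκ : ∀ x : GaloisField p m, εmap p m t ht (κ p m t x) = x := by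
    intro x
    rw [show κ p m t x = mkRt p m t (C x) from rfl, eps_mk]
    simp
  by_cases ha : a = 0
  · have hb : b ≠ 0 := fun h => hab ⟨ha, h⟩
    have hsimp : C (κ p m t a) * X + C (κ p m t b) = C (κ p m t b) := by
      simp [ha]
    rw [hsimp]
    exact (((isUnit_iff_ne_zero.2 hb).map (κ p m t)).map
      (C : Rt p m t →+* Polynomial (Rt p m t))).map Qmk
  · -- a ≠ 0
    set y : GaloisField p m := -(b / a) with hy
    set c : Rt p m t := κ p m t y with hc
    have hfactor : C (κ p m t a) * X + C (κ p m t b)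
        = C (κ p m t a) * (X - C c) := by
      have hac : κ p m t a * κ p m t y = - κ p m t b := by
        rw [← map_mul, ← map_neg]
        congr 1
        rw [hy]
        field_simp
      rw [mul_sub, ← C_mul, hac, map_neg, sub_neg_eq_add]
    -- f.eval c is a unit in Rt
    have hεeval : εmap p m t ht (f.eval c) = (y ^ 2 + α00 * y + β00) ^ p ^ s := by
      have hevA : εmap p m t ht A = αc 0 := by
        rw [hA, eps_mk, eval_zero_sum t ht]
      have hevB : εmap p m t ht B = βc 0 := by
        rw [hB, eps_mk, eval_zero_sum t ht]
      have heval : f.eval c = c ^ (2 * p ^ s) + A * c ^ p ^ s + B := by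
        simp [hf]
      rw [heval, map_add, map_add, map_mul, map_pow, map_pow, heκ, hevA, hevB,
        ← hα00, ← hβ00, add_pow_char_pow, add_pow_char_pow, mul_pow, ← pow_mul]
    have hunit_eval : IsUnit (f.eval c) := by
      apply isUnit_of_eps_ne_zero p m t ht
      rw [hεeval]
      exact pow_ne_zero _ (hnoroot y)
    -- X - C c divides f - C (f.eval c)
    obtain ⟨q, hq⟩ := X_sub_C_dvd_sub_C_eval (a := c) (p := f)
    have hf0 : Qmk f = 0 := Ideal.Quotient.eq_zero_iff_mem.2 (Ideal.subset_span rfl)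
    have key : Qmk (C (f.eval c)) = Qmk (X - C c) * Qmk (-q) := by
      have hsub : C (f.eval c) = f - (X - C c) * q := by rw [← hq]; ring
      rw [hsub, map_sub, hf0, map_mul, map_neg]
      ring
    have hunit2 : IsUnit (Qmk (X - C c)) := by
      have hu : IsUnit (Qmk (C (f.eval c))) :=
        (hunit_eval.map (C : Rt p m t →+* Polynomial (Rt p m t))).map Qmk
      rw [key] at hu
      letI := Ideal.Quotient.commRing (Ideal.span {f})
      exact isUnit_of_mul_isUnit_left hu
    rw [hfactor, map_mul]
    exact (((isUnit_iff_ne_zero.2 ha).map (κ p m t)).map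
      (C : Rt p m t →+* Polynomial (Rt p m t))).map Qmk |>.mul hunit2
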